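/- arXiv:1807.07841 — 7 statements merged into one kernel-verified Lean document; each statement's English description precedes it below -/
import Mathlib

section
/- Let G be a group and n > 1. Suppose A : Gⁿ → G is a group homomorphism that is symmetric (invariant under permutations of its arguments) and unanimous (A(g, g, ..., g) = g for all g ∈ G). Then G is abelian. -/
/-- If a group `G` admits a symmetric unanimous aggregation homomorphism
`A : Gⁿ → G` for some `n > 1`, then `G` is abelian. -/
theorem stmt0 {G : Type*} [Group G] (n : ℕ) (hn : 1 < n)
    (A : (Fin n → G) →* G)
    (hsym : ∀ (σ : Equiv.Perm (Fin n)) (g : Fin n → G), A (g ∘ σ) = A g)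
    (huna : ∀ g : G, A (fun _ => g) = g) :
    ∀ a b : G, a * b = b * a := by
  set i0 : Fin n := ⟨0, by omega⟩ with hi0
  set i1 : Fin n := ⟨1, hn⟩ with hi1
  have h01 : i0 ≠ i1 := by
    intro h; exact absurd (congrArg Fin.val h) (by simp [hi0, hi1])
  -- all coordinates give the same value
  have hsingle : ∀ (i : Fin n) (a : G),
      A (Pi.mulSingle i a) = A (Pi.mulSingle i0 a) := by
    intro i a
    have hc : Pi.mulSingle i0 a ∘ (Equiv.swap i0 i) = Pi.mulSingle i a := by
      funext j
      simp only [Function.comp_apply, Pi.mulSingle, Function.update]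
      by_cases hj : j = i
      · subst hj; simp [Equiv.swap_apply_right]
      · by_cases hj0 : j = i0
        · subst hj0
          simp [Equiv.swap_apply_left, Ne.symm hj, hj]
        · simp [Equiv.swap_apply_of_ne_of_ne hj0 hj, hj, hj0]
    rw [← hc, hsym]
  -- the two coordinate values commute
  have hcomm : ∀ a b : G,
      Commute (A (Pi.mulSingle i0 a)) (A (Pi.mulSingle i0 b)) := by
    intro a b
    have h := (Pi.mulSingle_commute h01 a b).map A
    rwa [hsingle i1 b] at h
  -- a equals (A (single i0 a))^n
  have hpow : ∀ a : G, A (Pi.mulSingle i0 a) ^ n = a := by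
    intro a
    have hdecomp : (Finset.univ.noncommProd (fun i => Pi.mulSingle i a)
        (fun i _ j _ _ => Pi.mulSingle_apply_commute (fun _ : Fin n => a) i j) : Fin n → G)
        = fun _ => a := Finset.noncommProd_mulSingle (fun _ : Fin n => a)
    have := congrArg A hdecomp
    replace this := (Finset.map_noncommProd (g := A) _ _ _).symm.trans this
    replace this := (Finset.noncommProd_eq_pow_card _ _ _ (A (Pi.mulSingle i0 a))
      (fun i _ => hsingle i a)).symm.trans this
    rw [Finset.card_univ, Fintype.card_fin] at this
    rw [this]
    exact huna a
  intro a b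
  have h := ((hcomm a b).pow_pow n n)
  rwa [hpow, hpow] at h
end

section
/- Let G be a group and n > 1. Suppose A : Gⁿ → G is a group homomorphism that is symmetric and unanimous. Then G is uniquely n-divisible: for every g ∈ G there exists a unique h ∈ G with hⁿ = g. -/
/-- If a group `G` admits a symmetric unanimous aggregation homomorphism
`A : Gⁿ → G` for some `n > 1`, then `G` is uniquely `n`-divisible. -/
theorem stmt1 {G : Type*} [Group G] (n : ℕ) (hn : 1 < n)
    (A : (Fin n → G) →* G)
    (hsym : ∀ (σ : Equiv.Perm (Fin n)) (g : Fin n → G), A (g ∘ σ) = A g)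
    (huna : ∀ g : G, A (fun _ => g) = g) :
    ∀ g : G, ∃! h : G, h ^ n = g := by
  haveI : NeZero n := ⟨by omega⟩
  set F : G →* G := A.comp (MonoidHom.mulSingle (fun _ : Fin n => G) 0) with hF
  have hall : ∀ (i : Fin n) (x : G), A (Pi.mulSingle i x) = F x := by
    intro i x
    have hcomp : (Pi.mulSingle (0 : Fin n) x) ∘ (Equiv.swap (0 : Fin n) i) =
        Pi.mulSingle i x := by
      funext j
      rcases eq_or_ne j i with rfl | hj
      · simp [Pi.mulSingle_apply]
      · rcases eq_or_ne j 0 with rfl | hj0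
        · simp [Pi.mulSingle_apply, Equiv.swap_apply_def, Ne.symm hj]
        · simp [Pi.mulSingle_apply, Equiv.swap_apply_of_ne_of_ne hj0 hj, hj0, hj]
    rw [← hcomp, hsym]
    rfl
  have key : ∀ x : G, (F x) ^ n = x := by
    intro x
    have hns := Finset.noncommProd_mulSingle (fun _ : Fin n => x)
    have h1 := Finset.univ.map_noncommProd
      (fun i : Fin n => Pi.mulSingle i x)
      (by intro i _ j _ _; exact Pi.mulSingle_apply_commute (fun _ => x) i j) A
    rw [hns] at h1
    rw [huna] at h1
    replace h1 := h1.trans (Finset.noncommProd_eq_pow_card _ _ _ (F x) (fun i _ => hall i x))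
    rw [Finset.card_univ, Fintype.card_fin] at h1
    exact h1.symm
  intro g
  refine ⟨F g, key g, ?_⟩
  intro y hy
  calc y = F (y ^ n) := by rw [map_pow, key]
    _ = F g := by rw [hy]
end

section
/- Let G be a group and n > 1. Suppose A : Gⁿ → G is a group homomorphism that is symmetric and unanimous, and define ρ : G → G by ρ(g) = A(g, e, ..., e) (g in the first coordinate, identity elsewhere). Then ρ is a group homomorphism satisfying ρ(g)ⁿ = g for all g ∈ G, and ρ is bijective. -/
/-- Given a symmetric unanimous aggregation homomorphism `A : Gⁿ → G`, `n > 1`,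
the map `ρ(g) = A(g, e, ..., e)` is a bijective homomorphism with `ρ(g)ⁿ = g`. -/
theorem stmt2 {G : Type*} [Group G] (n : ℕ) (hn : 1 < n)
    (A : (Fin n → G) →* G)
    (hsym : ∀ (σ : Equiv.Perm (Fin n)) (g : Fin n → G), A (g ∘ σ) = A g)
    (huna : ∀ g : G, A (fun _ => g) = g)
    (ρ : G → G)
    (hρ : ∀ g : G, ρ g = A (fun i => if i = (⟨0, by omega⟩ : Fin n) then g else 1)) :
    (∀ a b : G, ρ (a * b) = ρ a * ρ b) ∧ (∀ g : G, ρ g ^ n = g) ∧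
      Function.Bijective ρ := by
  set z : Fin n := ⟨0, by omega⟩ with hz
  have hhom : ∀ a b : G, ρ (a * b) = ρ a * ρ b := by
    intro a b
    rw [hρ, hρ, hρ, ← map_mul]
    congr 1
    funext i
    by_cases h : i = z <;> simp [h]
  have hdelta : ∀ (i : Fin n) (g : G),
      A (fun j => if j = i then g else 1) = ρ g := by
    intro i g
    rw [hρ]
    rw [← hsym (Equiv.swap z i) (fun j => if j = z then g else 1)]
    congr 1
    funext j
    simp only [Function.comp]
    by_cases h : j = i
    · subst h; simp [Equiv.swap_apply_right]
    · rw [if_neg h, if_neg]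
      intro hc
      apply h
      have := congrArg (Equiv.swap z i) hc
      simpa [Equiv.swap_apply_left] using this
  have hpow : ∀ g : G, ρ g ^ n = g := by
    intro g
    have step : ∀ k : ℕ, k ≤ n →
        A (fun j => if (j : ℕ) < k then g else 1) = ρ g ^ k := by
      intro k
      induction k with
      | zero =>
        intro _
        have : (fun j : Fin n => if (j : ℕ) < 0 then g else 1) = (1 : Fin n → G) := by
          funext j; simp
        rw [this, map_one, pow_zero]
      | succ m ih =>
        intro hm
        have hmn : m < n := by omega
        have hsplit : (fun j : Fin n => if (j : ℕ) < m + 1 then g else 1)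
            = (fun j : Fin n => if (j : ℕ) < m then g else 1) *
              (fun j : Fin n => if j = (⟨m, hmn⟩ : Fin n) then g else 1) := by
          funext j
          simp only [Pi.mul_apply]
          rcases lt_trichotomy (j : ℕ) m with h | h | h
          · rw [if_pos h, if_pos (by omega), if_neg (by
              intro hc; rw [hc] at h; simp at h), mul_one]
          · have : j = (⟨m, hmn⟩ : Fin n) := Fin.ext h
            rw [if_pos (by omega), if_neg (by omega), if_pos this, one_mul]
          · rw [if_neg (by omega), if_neg (by omega), if_neg (by
              intro hc; rw [hc] at h; simp at h), mul_one]
        rw [hsplit, map_mul, ih (by omega), hdelta, pow_succ]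
    have hfun : (fun j : Fin n => if (j : ℕ) < n then g else 1) = fun _ => g := by
      funext j; rw [if_pos j.isLt]
    rw [← step n le_rfl, hfun, huna]
  refine ⟨hhom, hpow, ?_, ?_⟩
  · intro a b hab
    rw [← hpow a, ← hpow b, hab]
  · intro g
    refine ⟨g ^ n, ?_⟩
    have hone : ρ 1 = 1 := by
      have := hhom 1 1
      rw [mul_one] at this
      exact (left_eq_mul.mp this)
    have hp : ∀ k : ℕ, ρ (g ^ k) = ρ g ^ k := by
      intro k
      induction k with
      | zero => simpa using hone
      | succ m ih => rw [pow_succ, pow_succ, hhom, ih]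
    rw [hp, hpow]
end

section
/- Let X be a Hausdorff space, n ∈ ℕ, and x = (x₁,...,xₙ) ∈ Xⁿ a tuple in which no value occurs in strictly more than n/2 coordinates. Then there exist pairwise disjoint open sets U₁,...,U_k in X, one around each distinct coordinate value, such that the product neighborhood ∏ᵢ U_{φ(i)} of x (where φ(i) indexes the distinct value equal to xᵢ) contains no tuple in which some value occurs in more than n/2 coordinates. -/
/-- If no value occurs in more than `n/2` coordinates of a tuple `x ∈ Xⁿ`
(`X` Hausdorff), there is a product neighborhood of `x`, built from pairwise
disjoint open sets around the distinct coordinate values, containing no tuple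
in which some value occurs in more than `n/2` coordinates. -/
theorem stmt6 {X : Type*} [TopologicalSpace X] [T2Space X] (n : ℕ)
    (x : Fin n → X)
    (hx : ∀ y : X, 2 * Nat.card {i : Fin n // x i = y} ≤ n) :
    ∃ U : Fin n → Set X,
      (∀ i, IsOpen (U i)) ∧ (∀ i, x i ∈ U i) ∧
      (∀ i j, x i = x j → U i = U j) ∧
      (∀ i j, x i ≠ x j → Disjoint (U i) (U j)) ∧
      ∀ z : Fin n → X, (∀ i, z i ∈ U i) →
        ∀ y : X, 2 * Nat.card {i : Fin n // z i = y} ≤ n := by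
  obtain ⟨V, hV, hVd⟩ := (Set.finite_range x).t2_separation
  refine ⟨fun i => V (x i), fun i => (hV (x i)).2, fun i => (hV (x i)).1,
    fun i j h => by simp only []; rw [h], fun i j h => hVd ⟨i, rfl⟩ ⟨j, rfl⟩ h, ?_⟩
  intro z hz y
  rcases isEmpty_or_nonempty {i : Fin n // z i = y} with he | ⟨⟨i0, hi0⟩⟩
  · simp [Nat.card_of_isEmpty]
  · have key : ∀ i : Fin n, z i = y → x i = x i0 := by
      intro i hi
      by_contra hne
      have hd := hVd (Set.mem_range_self i) (Set.mem_range_self i0) hne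
      exact hd.ne_of_mem (hz i) (hz i0) (hi.trans hi0.symm)
    have : Nat.card {i : Fin n // z i = y} ≤ Nat.card {i : Fin n // x i = x i0} := by
      apply Nat.card_le_card_of_injective
        (fun p : {i : Fin n // z i = y} => (⟨p.1, key p.1 p.2⟩ : {i : Fin n // x i = x i0}))
      intro a b hab
      exact Subtype.ext (congrArg Subtype.val hab :)
    calc 2 * Nat.card {i : Fin n // z i = y}
        ≤ 2 * Nat.card {i : Fin n // x i = x i0} := by omega
      _ ≤ n := hx (x i0)
end

section
/- Let X be a topological space, n > 1, and A : Xⁿ → X a continuous map that is symmetric and unanimous. Then for every k ≥ 1 and every basepoint x₀ ∈ X, the k-th homotopy group π_k(X, x₀) is abelian and uniquely n-divisible. -/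
open scoped Topology

open Topology.Homotopy GenLoop

/-- Abstract algebra lemma: a group admitting a symmetric unanimous
"mean" homomorphism `m : Gⁿ → G` is abelian and uniquely `n`-divisible. -/
theorem stmt7_alg {G : Type*} [Group G] (n : ℕ) (hn : 1 < n)
    (m : (Fin n → G) →* G)
    (hsymm : ∀ (σ : Equiv.Perm (Fin n)) (a : Fin n → G), m (a ∘ σ) = m a)
    (hdiag : ∀ a : G, m (fun _ => a) = a) :
    (∀ a b : G, a * b = b * a) ∧ (∀ g : G, ∃! h : G, h ^ n = g) := by
  have npos : 0 < n := by omega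
  haveI : NeZero n := ⟨by omega⟩
  set e : G →* G := m.comp (MonoidHom.mulSingle (fun _ : Fin n => G) 0) with he
  -- index independence
  have hind : ∀ (i : Fin n) (a : G), m (Pi.mulSingle i a) = e a := by
    intro i a
    have key : (Pi.mulSingle (M := fun _ : Fin n => G) 0 a) ∘ (Equiv.swap 0 i)
        = Pi.mulSingle i a := by
      funext j
      rcases eq_or_ne j i with rfl | hji
      · simp only [Function.comp_apply]
        rw [Equiv.swap_apply_right]
        simp [Pi.mulSingle]
      rcases eq_or_ne j 0 with rfl | hj0
      · have hi0 : i ≠ 0 := fun h => hji h.symm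
        simp only [Function.comp_apply]
        rw [Equiv.swap_apply_left]
        simp [Pi.mulSingle, Function.update, hi0, hji]
      · have : (Equiv.swap 0 i) j = j := Equiv.swap_apply_of_ne_of_ne hj0 hji
        simp [this, Pi.mulSingle, Function.update, hj0, hji]
    have := hsymm (Equiv.swap 0 i) (Pi.mulSingle 0 a)
    rw [key] at this
    rw [this]; rfl
  -- decomposition a = (e a)^n
  have hdec : ∀ a : G, (e a) ^ n = a := by
    intro a
    have step : ∀ k : ℕ, k ≤ n →
        m (fun i => if (i : ℕ) < k then a else 1) = (e a) ^ k := by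
      intro k hk
      induction k with
      | zero =>
        have h0 : (fun i : Fin n => if (i : ℕ) < 0 then a else 1) = 1 := by
          funext i; simp
        rw [h0, m.map_one, pow_zero]
      | succ k ih =>
        have hkn : k < n := by omega
        have harg : (fun i : Fin n => if (i : ℕ) < k + 1 then a else 1)
            = (fun i : Fin n => if (i : ℕ) < k then a else 1) * Pi.mulSingle (⟨k, hkn⟩ : Fin n) a := by
          funext i
          rcases lt_trichotomy (i : ℕ) k with h | h | h
          · have h1 : (i : ℕ) < k + 1 := by omega
            have hne : i ≠ (⟨k, hkn⟩ : Fin n) := by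
              intro hi; rw [hi] at h; simp at h
            simp [h1, h, Pi.mulSingle, Function.update, hne]
          · have h1 : (i : ℕ) < k + 1 := by omega
            have hieq : i = (⟨k, hkn⟩ : Fin n) := by
              apply Fin.ext; simpa using h
            simp [h1, h, hieq, Pi.mulSingle]
          · have h1 : ¬ (i : ℕ) < k + 1 := by omega
            have h2 : ¬ (i : ℕ) < k := by omega
            have hne : i ≠ (⟨k, hkn⟩ : Fin n) := by
              intro hi; rw [hi] at h; simp at h
            simp [h1, h2, Pi.mulSingle, Function.update, hne]
        rw [harg, m.map_mul, ih (by omega), hind, pow_succ]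
    have := step n le_rfl
    have harg : (fun i : Fin n => if (i : ℕ) < n then a else 1) = fun _ => a := by
      funext i; simp [i.isLt]
    rw [harg, hdiag] at this
    exact this.symm
  -- e values commute
  have hcomm : ∀ a b : G, Commute (e a) (e b) := by
    intro a b
    have h10 : (⟨1, hn⟩ : Fin n) ≠ 0 := by
      intro h; simpa using congrArg Fin.val h
    have key : (Pi.mulSingle (M := fun _ : Fin n => G) 0 a) * Pi.mulSingle (⟨1, hn⟩ : Fin n) b
        = Pi.mulSingle (⟨1, hn⟩ : Fin n) b * Pi.mulSingle (M := fun _ : Fin n => G) 0 a := by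
      funext j
      rcases eq_or_ne j 0 with rfl | hj0
      · simp [Pi.mulSingle, Function.update, h10.symm]
      rcases eq_or_ne j (⟨1, hn⟩ : Fin n) with rfl | hj1
      · simp [Pi.mulSingle, Function.update, h10, hj0]
      · simp [Pi.mulSingle, Function.update, hj0, hj1]
    have h1 : e a * m (Pi.mulSingle (⟨1, hn⟩ : Fin n) b)
        = m (Pi.mulSingle (⟨1, hn⟩ : Fin n) b) * e a := by
      have := congrArg m key
      rw [m.map_mul, m.map_mul] at this
      simpa [he] using this
    rw [hind] at h1
    exact h1
  constructor
  · intro a b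
    have := (hcomm a b).pow_pow n n
    rwa [hdec, hdec] at this
  · intro g
    refine ⟨e g, hdec g, ?_⟩
    intro h hh
    have : e (h ^ n) = (e h) ^ n := map_pow e h n
    rw [hh, hdec] at this
    exact this.symm

/-- If `X` admits a continuous symmetric unanimous map `A : Xⁿ → X`, `n > 1`,
then every homotopy group `π_k(X, x₀)`, `k ≥ 1`, is abelian and uniquely
`n`-divisible. -/
theorem stmt7 {X : Type*} [TopologicalSpace X] (n : ℕ) (hn : 1 < n)
    (A : C((Fin n → X), X))
    (hsym : ∀ (σ : Equiv.Perm (Fin n)) (x : Fin n → X), A (x ∘ σ) = A x)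
    (huna : ∀ x : X, A (fun _ => x) = x) :
    ∀ (k : ℕ) (x₀ : X),
      (∀ a b : π_ (k + 1) X x₀, a * b = b * a) ∧
      (∀ g : π_ (k + 1) X x₀, ∃! h : π_ (k + 1) X x₀, h ^ n = g) := by
  intro k x₀
  set N := Fin (k + 1)
  -- combine generalized loops via A
  let combine : (Fin n → Ω^ N X x₀) → Ω^ N X x₀ := fun f =>
    ⟨A.comp ⟨fun t i => f i t, by
        exact continuous_pi fun i => (f i).1.continuous.comp continuous_id⟩,
      by
        intro y hy
        have : (fun i => f i y) = fun _ => x₀ := funext fun i => (f i).2 y hy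
        simp only [ContinuousMap.comp_apply, ContinuousMap.coe_mk]
        rw [this, huna]⟩
  have combine_apply : ∀ (f : Fin n → Ω^ N X x₀) (t : N → unitInterval),
      combine f t = A (fun i => f i t) := fun _ _ => rfl
  -- respects homotopy
  have hresp : ∀ (f g : Fin n → Ω^ N X x₀), (∀ i, f i ≈ g i) → combine f ≈ combine g := by
    intro f g hfg
    have : ∀ i, Nonempty ((f i).1.HomotopyRel (g i).1 (Cube.boundary N)) := fun i => hfg i
    obtain ⟨H⟩ : Nonempty (∀ i, (f i).1.HomotopyRel (g i).1 (Cube.boundary N)) :=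
      Classical.nonempty_pi.2 this
    refine ⟨⟨⟨⟨fun p => A (fun i => H i p), ?_⟩, ?_, ?_⟩, ?_⟩⟩
    · exact A.continuous.comp (continuous_pi fun i => (H i).continuous)
    · intro y
      show A (fun i => H i (0, y)) = combine f y
      rw [combine_apply]
      congr 1; funext i; exact (H i).apply_zero y
    · intro y
      show A (fun i => H i (1, y)) = combine g y
      rw [combine_apply]
      congr 1; funext i; exact (H i).apply_one y
    · intro t y hy
      show A (fun i => H i (t, y)) = combine f y
      rw [combine_apply]
      congr 1; funext i; exact (H i).prop' t y hy
  -- the mean map on the homotopy group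
  let mfun : (Fin n → π_ (k + 1) X x₀) → π_ (k + 1) X x₀ := fun q =>
    Quotient.finLiftOn q (fun f => ⟦combine f⟧)
      (fun f g h => Quotient.sound (hresp f g h))
  have mfun_mk : ∀ f : Fin n → Ω^ N X x₀,
      mfun (fun i => ⟦f i⟧) = ⟦combine f⟧ := by
    intro f
    show Quotient.finLiftOn (fun i => ⟦f i⟧) _ _ = _
    rw [Quotient.finLiftOn_mk]
  -- combine of constants
  have combine_diag : ∀ p : Ω^ N X x₀, combine (fun _ => p) = p := by
    intro p; ext t; rw [combine_apply, huna]
  -- combine and transAt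
  have combine_trans : ∀ (p q : Fin n → Ω^ N X x₀),
      combine (fun i => transAt 0 (p i) (q i)) = transAt 0 (combine p) (combine q) := by
    intro p q
    ext t
    rw [combine_apply]
    show A (fun i => transAt 0 (p i) (q i) t) =
      if (t 0 : ℝ) ≤ 1 / 2
      then combine p (Function.update t 0 <| Set.projIcc 0 1 zero_le_one (2 * t 0))
      else combine q (Function.update t 0 <| Set.projIcc 0 1 zero_le_one (2 * t 0 - 1))
    have htrans : ∀ (u v : Ω^ N X x₀), transAt 0 u v t =
        if (t 0 : ℝ) ≤ 1 / 2
        then u (Function.update t 0 <| Set.projIcc 0 1 zero_le_one (2 * t 0))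
        else v (Function.update t 0 <| Set.projIcc 0 1 zero_le_one (2 * t 0 - 1)) :=
      fun u v => rfl
    simp only [htrans, combine_apply]
    split_ifs <;> rfl
  -- multiplicativity
  have hmul : ∀ a b : Fin n → π_ (k + 1) X x₀, mfun (a * b) = mfun a * mfun b := by
    intro a b
    have key : ∀ (p q : Fin n → Ω^ N X x₀), a = (⟦p ·⟧) → b = (⟦q ·⟧) →
        mfun (a * b) = mfun a * mfun b := by
      intro p q hp hq
      have hab : a * b = fun i => ⟦transAt 0 (q i) (p i)⟧ := by
        funext i
        simp only [Pi.mul_apply, hp, hq]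
        exact HomotopyGroup.mul_spec
      rw [hab, hp, hq, mfun_mk, mfun_mk, mfun_mk, combine_trans q p,
        ← HomotopyGroup.mul_spec]
    induction a using Quotient.induction_on_fintype_pi with | _ p =>
    induction b using Quotient.induction_on_fintype_pi with | _ q =>
    exact key p q rfl rfl
  have hone : mfun 1 = 1 := by
    have : (1 : Fin n → π_ (k + 1) X x₀) = fun _ => ⟦const⟧ := rfl
    rw [this, mfun_mk, combine_diag]
    rfl
  let m : (Fin n → π_ (k + 1) X x₀) →* π_ (k + 1) X x₀ :=
    { toFun := mfun, map_one' := hone, map_mul' := hmul }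
  have hsymm : ∀ (σ : Equiv.Perm (Fin n)) (a : Fin n → π_ (k + 1) X x₀),
      m (a ∘ σ) = m a := by
    intro σ a
    induction a using Quotient.induction_on_fintype_pi with | _ p =>
    have h1 : (fun i => (⟦p i⟧ : π_ (k+1) X x₀)) ∘ σ = fun i => ⟦p (σ i)⟧ := rfl
    show mfun (fun i => ⟦p (σ i)⟧) = mfun (fun i => ⟦p i⟧)
    rw [mfun_mk, mfun_mk]
    congr 1
    ext t
    rw [combine_apply, combine_apply]
    exact hsym σ (fun i => p i t)
  have hdiag : ∀ a : π_ (k + 1) X x₀, m (fun _ => a) = a := by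
    intro a
    induction a using Quotient.ind with | _ p =>
    show mfun _ = _
    rw [mfun_mk (fun _ => p), combine_diag]
  exact stmt7_alg n hn m hsymm hdiag
end

section
/- Let X be a path-connected topological space, n > 1, and A : Xⁿ → X a continuous symmetric unanimous map. Then the fundamental group π₁(X, x₀) is abelian for any basepoint x₀. -/
open CategoryTheory

attribute [local instance] Path.Homotopic.setoid

namespace Stmt8Aux

variable {X : Type*} [TopologicalSpace X] {n : ℕ}
variable (A : C((Fin n → X), X))

section
variable (huna : ∀ x : X, A (fun _ => x) = x) {x₀ : X}

def along (g : Fin n → Path x₀ x₀) : Path x₀ x₀ where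
  toFun t := A fun i => g i t
  continuous_toFun := A.continuous.comp (continuous_pi fun i => (g i).continuous)
  source' := by simp [huna]
  target' := by simp [huna]

@[simp] lemma along_apply (g : Fin n → Path x₀ x₀) (t : unitInterval) :
    along A huna g t = A fun i => g i t := rfl

theorem along_homotopic {g g' : Fin n → Path x₀ x₀}
    (h : ∀ i, (g i).Homotopic (g' i)) :
    (along A huna g).Homotopic (along A huna g') := by
  have F : ∀ i, Path.Homotopy (g i) (g' i) := fun i => (h i).some
  refine ⟨⟨⟨⟨fun p => A fun i => F i p, ?_⟩, ?_, ?_⟩, ?_⟩⟩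
  · exact A.continuous.comp (continuous_pi fun i => (F i).continuous)
  · intro t; simp [along]
  · intro t; simp [along]
  · intro t x hx
    show A (fun i => F i (t, x)) = along A huna g x
    have : (fun i => F i (t, x)) = fun i => g i x := funext fun i => (F i).eq_fst t hx
    rw [this]; rfl

theorem along_const (p : Path x₀ x₀) : along A huna (fun _ => p) = p := by
  ext t; exact huna (p t)

theorem along_perm (hsym : ∀ (σ : Equiv.Perm (Fin n)) (x : Fin n → X), A (x ∘ σ) = A x)
    (σ : Equiv.Perm (Fin n)) (g : Fin n → Path x₀ x₀) :
    along A huna (fun i => g (σ i)) = along A huna g := by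
  ext t; exact hsym σ (fun i => g i t)

theorem along_trans (g g' : Fin n → Path x₀ x₀) :
    along A huna (fun i => (g i).trans (g' i)) =
      (along A huna g).trans (along A huna g') := by
  ext t
  by_cases h : (t : ℝ) ≤ 2⁻¹ <;>
    simp [Path.trans_apply, one_div, h]

variable (x₀) in
noncomputable def gam (f : Fin n → Path.Homotopic.Quotient x₀ x₀) :
    Path.Homotopic.Quotient x₀ x₀ :=
  Quotient.map (along A huna) (fun _ _ h => along_homotopic A huna h) (Quotient.finChoice f)

theorem gam_mk (g : Fin n → Path x₀ x₀) :
    gam A huna x₀ (fun i => ⟦g i⟧) = ⟦along A huna g⟧ := by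
  unfold gam
  rw [Quotient.finChoice_eq, Quotient.map_mk]

theorem gam_const (p : Path.Homotopic.Quotient x₀ x₀) :
    gam A huna x₀ (fun _ => p) = p := by
  induction p using Quotient.inductionOn with
  | h p => rw [gam_mk, along_const]

theorem gam_perm (hsym : ∀ (σ : Equiv.Perm (Fin n)) (x : Fin n → X), A (x ∘ σ) = A x)
    (σ : Equiv.Perm (Fin n)) (f : Fin n → Path.Homotopic.Quotient x₀ x₀) :
    gam A huna x₀ (f ∘ σ) = gam A huna x₀ f := by
  have hf : f = fun i => ⟦Quotient.out (s := Path.Homotopic.setoid x₀ x₀) (f i)⟧ := funext fun i => (Quotient.out_eq (s := Path.Homotopic.setoid x₀ x₀) (f i)).symm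
  rw [hf]
  have : ((fun i => ⟦Quotient.out (s := Path.Homotopic.setoid x₀ x₀) (f i)⟧ : Fin n → Path.Homotopic.Quotient x₀ x₀) ∘ σ)
      = fun i => ⟦Quotient.out (s := Path.Homotopic.setoid x₀ x₀) (f (σ i))⟧ := rfl
  refine (congrArg (gam A huna x₀) this).trans ?_
  rw [gam_mk, gam_mk]
  exact congrArg (Quotient.mk _) (along_perm A huna hsym σ fun i => Quotient.out (s := Path.Homotopic.setoid x₀ x₀) (f i))

theorem gam_comp (f g : Fin n → Path.Homotopic.Quotient x₀ x₀) :
    gam A huna x₀ (fun i => (f i).trans (g i)) =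
      (gam A huna x₀ f).trans (gam A huna x₀ g) := by
  have hf : f = fun i => ⟦Quotient.out (s := Path.Homotopic.setoid x₀ x₀) (f i)⟧ := funext fun i => (Quotient.out_eq (s := Path.Homotopic.setoid x₀ x₀) (f i)).symm
  have hg : g = fun i => ⟦Quotient.out (s := Path.Homotopic.setoid x₀ x₀) (g i)⟧ := funext fun i => (Quotient.out_eq (s := Path.Homotopic.setoid x₀ x₀) (g i)).symm
  rw [hf, hg]
  have : (fun i => Path.Homotopic.Quotient.trans (⟦Quotient.out (s := Path.Homotopic.setoid x₀ x₀) (f i)⟧ : Path.Homotopic.Quotient x₀ x₀) ⟦Quotient.out (s := Path.Homotopic.setoid x₀ x₀) (g i)⟧)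
      = fun i => (⟦((Quotient.out (s := Path.Homotopic.setoid x₀ x₀) (f i)).trans (Quotient.out (s := Path.Homotopic.setoid x₀ x₀) (g i)))⟧ : Path.Homotopic.Quotient x₀ x₀) := by
    funext i; rfl
  rw [this, gam_mk, gam_mk, gam_mk, along_trans]; rfl

end



/-- Abstract algebra: a monoid admitting a symmetric, unanimous, multiplicative
`n`-ary operation (`n ≥ 2`) is commutative. -/
theorem monoid_aux {M : Type*} [Monoid M] {n : ℕ} (hn : 1 < n)
    (G : (Fin n → M) → M)
    (h1 : ∀ p, G (fun _ => p) = p)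
    (hperm : ∀ (e : Equiv.Perm (Fin n)) (f : Fin n → M), G (f ∘ e) = G f)
    (hmul : ∀ f g : Fin n → M, G (fun i => f i * g i) = G f * G g)
    (p q : M) : p * q = q * p := by
  haveI : NeZero n := ⟨by omega⟩
  have h01 : (0 : Fin n) ≠ 1 := by
    intro h
    have := congrArg Fin.val h
    simp [Fin.val_one', Nat.mod_eq_of_lt hn] at this
  set φ : M → M := fun p => G (fun i => if i = 0 then p else 1) with hφ
  have hswap0 : ∀ (c : Fin n) (i : Fin n), Equiv.swap (0 : Fin n) c i = 0 ↔ i = c := by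
    intro c i
    rw [Equiv.apply_eq_iff_eq_symm_apply, Equiv.symm_swap, Equiv.swap_apply_left]
  have hsingle : ∀ (c : Fin n) (r : M), G (fun i => if i = c then r else 1) = φ r := by
    intro c r
    have he : (fun i : Fin n => if i = c then r else 1)
        = (fun i => if i = 0 then r else 1) ∘ (Equiv.swap 0 c) := by
      funext i
      simp only [Function.comp_apply]
      by_cases h : i = c <;> simp [hswap0 c i, h]
    rw [he, hperm]
  have hn1 : n ≠ 1 := by omega
  have hcomm : ∀ p q : M, φ p * φ q = φ q * φ p := by
    intro p q
    have e1 : ∀ a b : M, (fun i : Fin n => if i = 0 then a else if i = 1 then b else 1)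
        = fun i => (if i = 0 then a else 1) * (if i = 1 then b else 1) := by
      intro a b
      funext i
      by_cases i0 : i = 0
      · subst i0; simp [h01]
      · by_cases i1 : i = 1 <;> simp [i0, i1, hn1]
    have e2 : (fun i : Fin n => if i = 0 then p else if i = 1 then q else 1)
        = (fun i : Fin n => if i = 0 then q else if i = 1 then p else 1) ∘ Equiv.swap 0 1 := by
      funext i
      simp only [Function.comp_apply]
      by_cases i0 : i = 0
      · subst i0; simp [Equiv.swap_apply_left, h01, Ne.symm h01, hn1]
      · by_cases i1 : i = 1
        · subst i1; simp [Equiv.swap_apply_right, hn1]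
        · rw [Equiv.swap_apply_of_ne_of_ne i0 i1]
          simp [i0, i1, hn1]
    calc φ p * φ q
        = G (fun i : Fin n => if i = 0 then p else 1) * G (fun i => if i = 1 then q else 1) := by
          rw [hsingle 1 q]
      _ = G (fun i : Fin n => if i = 0 then p else if i = 1 then q else 1) := by
          rw [e1, hmul]
      _ = G (fun i : Fin n => if i = 0 then q else if i = 1 then p else 1) := by
          rw [e2, hperm]
      _ = G (fun i : Fin n => if i = 0 then q else 1) * G (fun i => if i = 1 then p else 1) := by
          rw [e1, hmul]
      _ = φ q * φ p := by rw [hsingle 1 p]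
  have hpow : ∀ p : M, φ p ^ n = p := by
    intro p
    have key : ∀ k, k ≤ n → G (fun i => if (i : ℕ) < k then p else 1) = φ p ^ k := by
      intro k
      induction k with
      | zero => intro _; simpa using h1 1
      | succ k ih =>
        intro hk1
        have hk : k < n := hk1
        have e : (fun i : Fin n => if (i : ℕ) < k + 1 then p else 1)
            = fun i : Fin n => (if (i : ℕ) < k then p else 1) * (if i = ⟨k, hk⟩ then p else 1) := by
          funext i
          rcases lt_trichotomy (i : ℕ) k with h | h | h
          · have : i ≠ ⟨k, hk⟩ := Fin.ne_of_val_ne (Nat.ne_of_lt h)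
            simp [h, Nat.lt_succ_of_lt h, this]
          · have : i = ⟨k, hk⟩ := Fin.ext h
            simp [this, h, Nat.lt_irrefl]
          · have h2 : ¬ (i : ℕ) < k + 1 := by omega
            have h3 : ¬ (i : ℕ) < k := by omega
            have : i ≠ ⟨k, hk⟩ := Fin.ne_of_val_ne (show (i : ℕ) ≠ k by omega)
            simp [h2, h3, this]
        rw [e, hmul, ih (le_of_lt hk), hsingle (⟨k, hk⟩ : Fin n) p, pow_succ]
    have h1' := key n le_rfl
    rw [show (fun i : Fin n => if (i : ℕ) < n then p else 1) = fun _ => p from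
      funext fun i => if_pos i.isLt, h1] at h1'
    exact h1'.symm
  calc p * q = φ p ^ n * φ q ^ n := by rw [hpow, hpow]
    _ = φ q ^ n * φ p ^ n := by
      have c : Commute (φ p) (φ q) := hcomm p q
      exact (c.pow_pow n n).eq
    _ = q * p := by rw [hpow, hpow]


end Stmt8Aux

open Stmt8Aux in
/-- If a path-connected space `X` admits a continuous symmetric unanimous map
`A : Xⁿ → X`, `n > 1`, then its fundamental group is abelian. -/
theorem stmt8 {X : Type*} [TopologicalSpace X] [PathConnectedSpace X]
    (n : ℕ) (hn : 1 < n)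
    (A : C((Fin n → X), X))
    (hsym : ∀ (σ : Equiv.Perm (Fin n)) (x : Fin n → X), A (x ∘ σ) = A x)
    (huna : ∀ x : X, A (fun _ => x) = x) :
    ∀ (x₀ : X) (a b : FundamentalGroup X x₀), a * b = b * a := by
  intro x₀ a b
  have key : ∀ p q : CategoryTheory.End (⟨x₀⟩ : FundamentalGroupoid X), p * q = q * p := by
    intro p q
    refine monoid_aux (M := CategoryTheory.End ((⟨x₀⟩ : FundamentalGroupoid X))) hn (Stmt8Aux.gam A huna x₀) ?_ ?_ ?_ p q
    · exact fun r => gam_const A huna r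
    · exact fun e f => gam_perm A huna hsym e f
    · exact fun f g => gam_comp A huna g f
  exact key a b
end

section
/- Let G be a group such that for every n > 1 there exists a symmetric unanimous homomorphism Aₙ : Gⁿ → G. Then G is abelian and uniquely divisible, hence carries a (unique) ℚ-vector space structure. -/
/-- If a group `G` admits symmetric unanimous aggregation homomorphisms
`Aₙ : Gⁿ → G` for all `n > 1`, then `G` is abelian and uniquely divisible, and
hence carries a unique `ℚ`-scalar-multiplication structure. -/
theorem stmt12 {G : Type*} [Group G]
    (h : ∀ n : ℕ, 1 < n → ∃ A : (Fin n → G) →* G,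
      (∀ (σ : Equiv.Perm (Fin n)) (g : Fin n → G), A (g ∘ σ) = A g) ∧
      ∀ g : G, A (fun _ => g) = g) :
    (∀ a b : G, a * b = b * a) ∧
    (∀ (m : ℕ), 0 < m → ∀ g : G, ∃! h : G, h ^ m = g) ∧
    (∃! smul : ℚ → G → G,
      (∀ g : G, smul 1 g = g) ∧
      (∀ (q : ℚ) (g g' : G), smul q (g * g') = smul q g * smul q g') ∧
      (∀ (q r : ℚ) (g : G), smul (q + r) g = smul q g * smul r g) ∧
      (∀ (q r : ℚ) (g : G), smul (q * r) g = smul q (smul r g))) := by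
  classical
  -- Step 1 : commutativity, using the binary aggregator
  have comm : ∀ a b : G, a * b = b * a := by
    obtain ⟨A, sym, unan⟩ := h 2 (by norm_num)
    set f : G → G := fun x => A (Pi.mulSingle (0 : Fin 2) x) with hf
    have h10 : ∀ x : G, A (Pi.mulSingle (1 : Fin 2) x) = f x := by
      intro x
      have hs : (Pi.mulSingle (0 : Fin 2) x) ∘ (Equiv.swap (0 : Fin 2) 1) =
          Pi.mulSingle (1 : Fin 2) x := by
        funext j
        fin_cases j <;> simp [Equiv.swap_apply_def]
      rw [← hs, sym]
    have hcomm : ∀ x y : G, f x * f y = f y * f x := by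
      intro x y
      have hmc : (Pi.mulSingle (0 : Fin 2) x : Fin 2 → G) * Pi.mulSingle (1 : Fin 2) y =
          (Pi.mulSingle (1 : Fin 2) y : Fin 2 → G) * Pi.mulSingle (0 : Fin 2) x := by
        funext j; fin_cases j <;> simp
      calc f x * f y = A (Pi.mulSingle (0 : Fin 2) x) * A (Pi.mulSingle (1 : Fin 2) y) := by
            rw [h10]
        _ = A (Pi.mulSingle (0 : Fin 2) x * Pi.mulSingle (1 : Fin 2) y) := (map_mul A _ _).symm
        _ = A (Pi.mulSingle (1 : Fin 2) y * Pi.mulSingle (0 : Fin 2) x) := by rw [hmc]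
        _ = A (Pi.mulSingle (1 : Fin 2) y) * A (Pi.mulSingle (0 : Fin 2) x) := map_mul A _ _
        _ = f y * f x := by rw [h10]
    have hsq : ∀ x : G, f x * f x = x := by
      intro x
      have hmc : (Pi.mulSingle (0 : Fin 2) x : Fin 2 → G) * Pi.mulSingle (1 : Fin 2) x =
          (fun _ : Fin 2 => x) := by
        funext j; fin_cases j <;> simp
      calc f x * f x = A (Pi.mulSingle (0 : Fin 2) x) * A (Pi.mulSingle (1 : Fin 2) x) := by
            rw [h10]
        _ = A (Pi.mulSingle (0 : Fin 2) x * Pi.mulSingle (1 : Fin 2) x) := (map_mul A _ _).symm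
        _ = A (fun _ : Fin 2 => x) := by rw [hmc]
        _ = x := unan x
    intro a b
    have c : Commute (f a) (f b) := hcomm a b
    have c2 : Commute (f a * f a) (f b * f b) := (c.mul_left c).mul_right (c.mul_left c)
    calc a * b = (f a * f a) * (f b * f b) := by rw [hsq, hsq]
      _ = (f b * f b) * (f a * f a) := c2.eq
      _ = b * a := by rw [hsq, hsq]
  letI : CommGroup G := { ‹Group G› with mul_comm := comm }
  -- Step 2 : unique divisibility
  have div : ∀ (m : ℕ), 0 < m → ∀ g : G, ∃! h : G, h ^ m = g := by
    intro m hm g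
    rcases eq_or_lt_of_le (show 1 ≤ m from hm) with hm1 | hm2
    · subst hm1
      exact ⟨g, by simp, fun y hy => by simpa using hy⟩
    · obtain ⟨A, sym, unan⟩ := h m hm2
      set F : G →* G := A.comp (MonoidHom.mulSingle (fun _ : Fin m => G) ⟨0, by omega⟩)
        with hF
      have hAi : ∀ (i : Fin m) (x : G), A (Pi.mulSingle i x) = F x := by
        intro i x
        have hs : (Pi.mulSingle (⟨0, by omega⟩ : Fin m) x) ∘
            (Equiv.swap (⟨0, by omega⟩ : Fin m) i) = Pi.mulSingle i x := by
          funext j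
          simp only [Function.comp_apply, Pi.mulSingle_apply, Equiv.swap_apply_def]
          split_ifs <;> simp_all
        rw [← hs, sym]
        rfl
      have hFpow : ∀ x : G, (F x) ^ m = x := by
        intro x
        have h1 : (fun _ : Fin m => x) = ∏ i : Fin m, Pi.mulSingle i x :=
          (Finset.univ_prod_mulSingle (fun _ : Fin m => x)).symm
        calc (F x) ^ m = ∏ _i : Fin m, F x := by
              rw [Finset.prod_const, Finset.card_univ, Fintype.card_fin]
          _ = ∏ i : Fin m, A (Pi.mulSingle i x) := by
              refine Finset.prod_congr rfl fun i _ => (hAi i x).symm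
          _ = A (∏ i : Fin m, Pi.mulSingle i x) := (map_prod A _ _).symm
          _ = A (fun _ : Fin m => x) := by rw [← h1]
          _ = x := unan x
      refine ⟨F g, hFpow g, ?_⟩
      intro y hy
      have : F (y ^ m) = y := by rw [map_pow, hFpow]
      rw [← hy, this]
  refine ⟨comm, div, ?_⟩
  -- Step 3 : the ℚ-action
  have pinj : ∀ (m : ℕ), 0 < m → ∀ x y : G, x ^ m = y ^ m → x = y := by
    intro m hm x y hxy
    obtain ⟨u, _, hu⟩ := div m hm (y ^ m)
    rw [hu x hxy, hu y rfl]
  have exroot : ∀ (m : ℕ) (g : G), ∃ h : G, 0 < m → h ^ m = g := by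
    intro m g
    rcases Nat.eq_zero_or_pos m with h0 | hp
    · exact ⟨1, fun hc => absurd h0 (by omega)⟩
    · exact ⟨(div m hp g).exists.choose, fun _ => (div m hp g).exists.choose_spec⟩
  choose rt hrt using exroot
  set smul : ℚ → G → G := fun q g => rt q.den (g ^ q.num) with hsmul
  have hsm : ∀ (q : ℚ) (g : G), (smul q g) ^ q.den = g ^ q.num := fun q g =>
    hrt q.den (g ^ q.num) q.den_pos
  -- cast facts about rationals
  have hnum : ∀ s : ℚ, (s.num : ℚ) = s * s.den := by
    intro s
    have hd : (s.den : ℚ) ≠ 0 := Nat.cast_ne_zero.mpr s.den_nz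
    exact (div_eq_iff hd).mp (Rat.num_div_den s)
  have hz1 : ∀ (x : G) (a : ℤ) (n : ℕ), (x ^ a) ^ n = x ^ (a * n) := by
    intro x a n
    rw [← zpow_natCast (x ^ a) n, ← zpow_mul]
  -- the four axioms
  have ax1 : ∀ g : G, smul 1 g = g := by
    intro g
    have h1 := hsm 1 g
    simpa using h1
  have ax2 : ∀ (q : ℚ) (g g' : G), smul q (g * g') = smul q g * smul q g' := by
    intro q g g'
    apply pinj q.den q.den_pos
    rw [mul_pow, hsm, hsm, hsm, mul_zpow]
  have ax3 : ∀ (q r : ℚ) (g : G), smul (q + r) g = smul q g * smul r g := by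
    intro q r g
    set s : ℚ := q + r with hsdef
    have hid : s.num * ((q.den : ℤ) * r.den) =
        q.num * ((s.den : ℤ) * r.den) + r.num * ((s.den : ℤ) * q.den) := by
      have hc : (s.num : ℚ) * ((q.den : ℚ) * r.den) =
          (q.num : ℚ) * ((s.den : ℚ) * r.den) + (r.num : ℚ) * ((s.den : ℚ) * q.den) := by
        rw [hnum s, hnum q, hnum r, hsdef]; ring
      exact_mod_cast hc
    apply pinj (s.den * (q.den * r.den))
        (Nat.mul_pos s.den_pos (Nat.mul_pos q.den_pos r.den_pos))
    have e1 : (smul s g) ^ (s.den * (q.den * r.den)) = g ^ (s.num * ((q.den : ℤ) * r.den)) := by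
      rw [pow_mul, hsm, hz1]; norm_cast
    have e2 : (smul q g) ^ (s.den * (q.den * r.den)) = g ^ (q.num * ((s.den : ℤ) * r.den)) := by
      rw [show s.den * (q.den * r.den) = q.den * (s.den * r.den) by ring, pow_mul, hsm, hz1]
      norm_cast
    have e3 : (smul r g) ^ (s.den * (q.den * r.den)) = g ^ (r.num * ((s.den : ℤ) * q.den)) := by
      rw [show s.den * (q.den * r.den) = r.den * (s.den * q.den) by ring, pow_mul, hsm, hz1]
      norm_cast
    rw [e1, mul_pow, e2, e3, ← zpow_add, hid]
  have ax4 : ∀ (q r : ℚ) (g : G), smul (q * r) g = smul q (smul r g) := by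
    intro q r g
    set t : ℚ := q * r with htdef
    have hid : t.num * ((q.den : ℤ) * r.den) = r.num * (q.num * t.den) := by
      have hc : (t.num : ℚ) * ((q.den : ℚ) * r.den) =
          (r.num : ℚ) * ((q.num : ℚ) * t.den) := by
        rw [hnum t, hnum q, hnum r, htdef]; ring
      exact_mod_cast hc
    apply pinj (t.den * (q.den * r.den))
        (Nat.mul_pos t.den_pos (Nat.mul_pos q.den_pos r.den_pos))
    have e1 : (smul t g) ^ (t.den * (q.den * r.den)) = g ^ (t.num * ((q.den : ℤ) * r.den)) := by
      rw [pow_mul, hsm, hz1]; norm_cast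
    have e2 : (smul q (smul r g)) ^ (t.den * (q.den * r.den)) =
        g ^ (r.num * (q.num * t.den)) := by
      rw [show t.den * (q.den * r.den) = q.den * (t.den * r.den) by ring, pow_mul, hsm, hz1,
        show q.num * ((t.den * r.den : ℕ) : ℤ) = (r.den : ℤ) * (q.num * t.den) by
          push_cast; ring,
        zpow_mul, zpow_natCast, hsm, ← zpow_mul]
    rw [e1, e2, hid]
  refine ⟨smul, ⟨ax1, ax2, ax3, ax4⟩, ?_⟩
  rintro f' ⟨a1, a2, a3, a4⟩
  have z0 : ∀ g : G, f' 0 g = 1 := by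
    intro g
    have h0 := a3 0 0 g
    norm_num at h0
    exact h0
  have hnatp : ∀ (n : ℕ) (q : ℚ) (g : G), f' (n * q) g = (f' q g) ^ n := by
    intro n
    induction n with
    | zero => intro q g; simpa using z0 g
    | succ k ih =>
      intro q g
      have hk : ((k + 1 : ℕ) : ℚ) * q = (k : ℚ) * q + q := by push_cast; ring
      rw [hk, a3, ih, pow_succ]
  have hnat' : ∀ (n : ℕ) (g : G), f' (n : ℚ) g = g ^ n := by
    intro n g
    have := hnatp n 1 g
    rwa [mul_one, a1] at this
  have hintp : ∀ (k : ℤ) (g : G), f' (k : ℚ) g = g ^ k := by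
    intro k g
    obtain ⟨n, hn | hn⟩ := Int.eq_nat_or_neg k
    · rw [hn, Int.cast_natCast, zpow_natCast]; exact hnat' n g
    · have hcast : (k : ℚ) + (n : ℚ) = 0 := by rw [hn]; push_cast; ring
      have hm : f' (k : ℚ) g * g ^ n = 1 := by
        calc f' (k : ℚ) g * g ^ n = f' (k : ℚ) g * f' ((n : ℕ) : ℚ) g := by rw [hnat' n g]
          _ = f' ((k : ℚ) + (n : ℚ)) g := (a3 _ _ _).symm
          _ = 1 := by rw [hcast, z0]
      have hinv : f' (k : ℚ) g = (g ^ n)⁻¹ := eq_inv_of_mul_eq_one_left hm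
      rw [hinv, hn, zpow_neg, zpow_natCast]
  funext q g
  apply pinj q.den q.den_pos
  rw [hsm]
  have hden : ((q.den : ℕ) : ℚ) * q = ((q.num : ℤ) : ℚ) := by
    rw [hnum q]; ring
  calc (f' q g) ^ q.den = f' (((q.den : ℕ) : ℚ) * q) g := (hnatp q.den q g).symm
    _ = f' ((q.num : ℤ) : ℚ) g := by rw [hden]
    _ = g ^ q.num := hintp q.num g
end
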